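/- Let m be a positive integer and let α, β, γ, δ be indeterminates with q := 1 + βγ − αδ. Then (1/β) ∑_{r=1}^{m} ((−δ)^{r−1} [r−1]! / ∏_{p=1}^{r}(1 + βγ[p−1])) · α^r · ∑_{1≤b_1<⋯<b_r≤m} q^{∑_{p=1}^r (b_p − m)} = (α/β) ∑_{d=0}^{m−1} 1/(1 + βγ[d]). -/

import Mathlib

noncomputable section

/-- the field of rational functions over ℚ in indeterminates α, β, γ, δ -/
abbrev K4 : Type := FractionRing (MvPolynomial (Fin 4) ℚ)

def av : K4 := algebraMap (MvPolynomial (Fin 4) ℚ) K4 (MvPolynomial.X 0)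
def bv : K4 := algebraMap (MvPolynomial (Fin 4) ℚ) K4 (MvPolynomial.X 1)
def cv : K4 := algebraMap (MvPolynomial (Fin 4) ℚ) K4 (MvPolynomial.X 2)
def dv : K4 := algebraMap (MvPolynomial (Fin 4) ℚ) K4 (MvPolynomial.X 3)

/-- q := 1 + βγ − αδ -/
def qv : K4 := 1 + bv * cv - av * dv

/-- the q-integer [n] = (1 - q^n)/(1 - q) -/
def qint (n : ℕ) : K4 := (1 - qv ^ n) / (1 - qv)

/-- the q-factorial [k]! with [0]! = 1 -/
def qfact (k : ℕ) : K4 := ∏ a ∈ Finset.range k, qint (a + 1)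

namespace Stmt7aux

open Finset MvPolynomial

lemma algMap_ne_zero (P : MvPolynomial (Fin 4) ℚ) (σ : Fin 4 → ℚ)
    (h : MvPolynomial.eval σ P ≠ 0) :
    algebraMap (MvPolynomial (Fin 4) ℚ) K4 P ≠ 0 := by
  intro hP
  apply h
  have hinj := IsFractionRing.injective (MvPolynomial (Fin 4) ℚ) K4
  have : P = 0 := hinj (by simpa using hP)
  simp [this]

def Q : MvPolynomial (Fin 4) ℚ := 1 + X 1 * X 2 - X 0 * X 3

lemma qv_eq : qv = algebraMap (MvPolynomial (Fin 4) ℚ) K4 Q := by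
  simp [qv, av, bv, cv, dv, Q, map_add, map_sub, map_mul, map_one]

lemma bv_ne : bv ≠ 0 := by
  apply algMap_ne_zero _ (fun _ => 1)
  simp

lemma dv_ne : dv ≠ 0 := by
  apply algMap_ne_zero _ (fun _ => 1)
  simp

lemma qv_ne : qv ≠ 0 := by
  rw [qv_eq]
  apply algMap_ne_zero _ (fun _ => 0)
  simp [Q]

lemma one_sub_qv_ne : (1 : K4) - qv ≠ 0 := by
  rw [qv_eq, show (1:K4) = algebraMap (MvPolynomial (Fin 4) ℚ) K4 1 from (map_one _).symm,
    ← map_sub]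
  apply algMap_ne_zero _ ![1,0,0,1]
  simp [Q]

lemma qpow (n : ℕ) : (qv - 1) * qint n = qv ^ n - 1 := by
  rw [qint]
  field_simp [one_sub_qv_ne]
  ring

lemma qint_geom (n : ℕ) : qint n = ∑ i ∈ range n, qv ^ i := by
  rw [qint, div_eq_iff one_sub_qv_ne]
  linear_combination geom_sum_mul qv n

lemma qint_add (a b : ℕ) : qint (a + b) = qint a + qv ^ a * qint b := by
  rw [qint, qint, qint]
  field_simp [one_sub_qv_ne]
  rw [pow_add]
  ring

lemma qint_zero : qint 0 = 0 := by simp [qint]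

lemma hq : bv * cv - av * dv = qv - 1 := by
  rw [qv]; ring

lemma qfact_zero : qfact 0 = 1 := by simp [qfact]

lemma qfact_succ (k : ℕ) : qfact (k + 1) = qfact k * qint (k + 1) :=
  Finset.prod_range_succ _ _

/-- D n = 1 + βγ[n] -/
def D (n : ℕ) : K4 := 1 + bv * cv * qint n

lemma D_zero : D 0 = 1 := by simp [D, qint_zero]

lemma D_ne (n : ℕ) : D n ≠ 0 := by
  have : D n = algebraMap (MvPolynomial (Fin 4) ℚ) K4
      (1 + X 1 * X 2 * ∑ i ∈ range n, Q ^ i) := by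
    rw [D, qint_geom, map_add, map_mul, map_mul, map_one, map_sum]
    simp only [map_pow, ← qv_eq, bv, cv]
  rw [this]
  apply algMap_ne_zero _ ![0,1,1,0]
  have h2 : MvPolynomial.eval ![(0:ℚ),1,1,0] Q = 2 := by
    simp [Q]; norm_num
  simp only [map_add, map_mul, map_one, map_sum, map_pow, h2, eval_X]
  have : (0:ℚ) < 1 + ![(0:ℚ),1,1,0] 1 * ![(0:ℚ),1,1,0] 2 * ∑ i ∈ range n, 2 ^ i := by
    simp only [Matrix.cons_val_one, Matrix.head_cons]
    norm_num
    rw [show ![(0:ℚ),1,1,0] 2 = 1 from rfl]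
    positivity
  linarith

/-- the normalized subset sum -/
def S (r m : ℕ) : K4 :=
  ∑ B ∈ (Finset.Icc 1 m).powersetCard r, qv ^ (∑ b ∈ B, b) * (qv ^ (r * m))⁻¹

lemma S_zero (m : ℕ) : S 0 m = 1 := by simp [S]

lemma S_gt {r m : ℕ} (h : m < r) : S r m = 0 := by
  rw [S, powersetCard_eq_empty.2 (by simpa using h), sum_empty]

lemma srec (r m : ℕ) :
    S (r + 1) (m + 1) = (qv ^ (r + 1))⁻¹ * S (r + 1) m + qv * (qv ^ (r + 1))⁻¹ * S r m := by
  have hnm : (m + 1) ∉ Finset.Icc 1 m := by simp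
  have hins : Finset.Icc 1 (m + 1) = insert (m + 1) (Finset.Icc 1 m) := by
    ext x; simp only [Finset.mem_Icc, Finset.mem_insert]; omega
  have hdisj : Disjoint ((Finset.Icc 1 m).powersetCard (r + 1))
      (((Finset.Icc 1 m).powersetCard r).image (insert (m + 1))) := by
    rw [Finset.disjoint_right]
    intro B hB' hB
    obtain ⟨C, hC, rfl⟩ := Finset.mem_image.1 hB'
    exact hnm ((mem_powersetCard.1 hB).1 (Finset.mem_insert_self _ _))
  rw [S, hins, powersetCard_succ_insert hnm, sum_union hdisj]
  congr 1
  · rw [S, Finset.mul_sum]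
    refine sum_congr rfl fun B hB => ?_
    field_simp [qv_ne]
    ring
  · rw [sum_image, S, Finset.mul_sum]
    · refine sum_congr rfl fun B hB => ?_
      have hBm : (m + 1) ∉ B := fun hc => hnm ((mem_powersetCard.1 hB).1 hc)
      rw [sum_insert hBm]
      field_simp [qv_ne]
      ring
    · intro B hB C hC hBC
      have hBm : (m + 1) ∉ B := fun hc => hnm ((mem_powersetCard.1 hB).1 hc)
      have hCm : (m + 1) ∉ C := fun hc => hnm ((mem_powersetCard.1 hC).1 hc)
      have h2 := congrArg (Finset.erase · (m + 1)) hBC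
      simpa [Finset.erase_insert, hBm, hCm] using h2

def Pp (k : ℕ) : K4 := ∏ p ∈ range k, D p

lemma Pp_zero : Pp 0 = 1 := by simp [Pp]
lemma Pp_succ (k : ℕ) : Pp (k + 1) = Pp k * D k := prod_range_succ _ _
lemma Pp_ne (k : ℕ) : Pp k ≠ 0 := prod_ne_zero_iff.2 fun p _ => D_ne p

def dd (r k : ℕ) : K4 := (-dv) ^ r * qfact r / Pp (r + k + 1)

lemma dd_zero_zero : dd 0 0 = 1 := by
  simp [dd, qfact_zero, Pp_succ, Pp_zero, D_zero]

lemma keyid (r k : ℕ) : D (r + k + 1) - av * dv * qint (r + 1) = qv ^ (r + 1) * D k := by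
  have h1 : r + k + 1 = (r + 1) + k := by ring
  rw [D, D, h1, qint_add]
  linear_combination qpow (r + 1) + qint (r + 1) * hq

lemma bracket (r k : ℕ) :
    dd r k + av * dd (r + 1) k = qv ^ (r + 1) * D k * dd r (k + 1) := by
  have e1 : r + 1 + k + 1 = (r + k + 1) + 1 := by ring
  have e2 : r + (k + 1) + 1 = (r + k + 1) + 1 := by ring
  rw [dd, dd, dd, e1, e2, Pp_succ (r + k + 1), qfact_succ, pow_succ]
  have h1 := Pp_ne (r + k + 1)
  have h2 := D_ne (r + k + 1)
  field_simp
  linear_combination ((-dv) ^ r * qfact r) * keyid r k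

def G (k m : ℕ) : K4 := ∑ r ∈ range (m + 1), av ^ r * S r m * dd r k

lemma G_zero (k : ℕ) : G k 0 = dd 0 k := by
  simp [G, S_zero]

lemma qv_inv_succ (i : ℕ) : qv * (qv ^ (i + 1))⁻¹ = (qv ^ i)⁻¹ := by
  rw [pow_succ', mul_inv, ← mul_assoc, mul_inv_cancel₀ qv_ne, one_mul]

lemma G_succ (k m : ℕ) : G k (m + 1) = qv * D k * G (k + 1) m := by
  have hterm : ∀ r, qv * D k * (av ^ r * S r m * dd r (k + 1)) =
      av ^ r * (qv ^ r)⁻¹ * S r m * dd r k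
        + av ^ (r + 1) * (qv ^ r)⁻¹ * S r m * dd (r + 1) k := by
    intro r
    have hb := bracket r k
    have hqd : dd r (k + 1) = (qv ^ (r + 1) * D k)⁻¹ * (dd r k + av * dd (r + 1) k) := by
      rw [hb]
      field_simp [qv_ne, D_ne]
    rw [hqd, pow_succ]
    field_simp [qv_ne, D_ne]
    ring
  calc G k (m + 1)
      = (∑ i ∈ range (m + 1), av ^ (i + 1) * S (i + 1) (m + 1) * dd (i + 1) k)
          + av ^ 0 * S 0 (m + 1) * dd 0 k := by
        rw [G, sum_range_succ']
    _ = (∑ i ∈ range (m + 1),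
          (av ^ (i + 1) * (qv ^ (i + 1))⁻¹ * S (i + 1) m * dd (i + 1) k
            + av ^ (i + 1) * (qv ^ i)⁻¹ * S i m * dd (i + 1) k)) + dd 0 k := by
        rw [S_zero]
        congr 1
        · refine sum_congr rfl fun i _ => ?_
          rw [srec, ← qv_inv_succ i]
          ring
        · ring
    _ = ((∑ i ∈ range (m + 1), av ^ (i + 1) * (qv ^ (i + 1))⁻¹ * S (i + 1) m * dd (i + 1) k)
          + dd 0 k)
          + ∑ i ∈ range (m + 1), av ^ (i + 1) * (qv ^ i)⁻¹ * S i m * dd (i + 1) k := by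
        rw [sum_add_distrib]
        ring
    _ = (∑ i ∈ range (m + 1), av ^ i * (qv ^ i)⁻¹ * S i m * dd i k)
          + ∑ i ∈ range (m + 1), av ^ (i + 1) * (qv ^ i)⁻¹ * S i m * dd (i + 1) k := by
        congr 1
        rw [sum_range_succ' (fun i => av ^ i * (qv ^ i)⁻¹ * S i m * dd i k) m,
          sum_range_succ, S_gt (Nat.lt_succ_self m)]
        simp [S_zero]
    _ = ∑ r ∈ range (m + 1), qv * D k * (av ^ r * S r m * dd r (k + 1)) := by
        rw [← sum_add_distrib]
        exact (sum_congr rfl fun r _ => (hterm r).symm)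
    _ = qv * D k * G (k + 1) m := by rw [G, mul_sum]

lemma Gval (m : ℕ) : ∀ k, G k m * (Pp k * Pp (k + m + 1)) = qv ^ m * Pp (k + m) := by
  induction m with
  | zero =>
    intro k
    rw [G_zero, dd, Nat.add_zero, Nat.zero_add, pow_zero, qfact_zero]
    field_simp [Pp_ne]
    rfl
  | succ m ih =>
    intro k
    have hkk : k + (m + 1) = (k + 1) + m := by ring
    rw [G_succ, hkk]
    have h1 := Pp_ne k
    have h2 := Pp_ne (k + 1)
    have h3 := Pp_ne (k + 1 + m + 1)
    have h4 := D_ne k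
    have h5 : Pp (k + 1) = Pp k * D k := Pp_succ k
    have hG : G (k + 1) m = qv ^ m * Pp (k + 1 + m) / (Pp (k + 1) * Pp (k + 1 + m + 1)) :=
      eq_div_of_mul_eq (mul_ne_zero h2 h3) (ih (k + 1))
    rw [hG, h5, pow_succ]
    field_simp [h1, h3, h4]

lemma G0 (m : ℕ) : G 0 m = qv ^ m * (D m)⁻¹ := by
  have h := Gval m 0
  rw [Pp_zero, one_mul, Nat.zero_add, Pp_succ] at h
  have h' : (G 0 m * D m) * Pp m = qv ^ m * Pp m := by linear_combination h
  have h'' := mul_right_cancel₀ (Pp_ne m) h'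
  field_simp [D_ne m]
  linear_combination h''

lemma dd_succ0 (s : ℕ) : dd (s + 1) 0 = dd s 0 * (-dv) * qint (s + 1) / D (s + 1) := by
  rw [dd, dd, qfact_succ, pow_succ, show s + 1 + 0 + 1 = (s + 0 + 1) + 1 from rfl,
    Pp_succ (s + 0 + 1), show s + 0 + 1 = s + 1 from rfl]
  have h1 := Pp_ne (s + 1)
  have h2 := D_ne (s + 1)
  field_simp

lemma keyid2 (s : ℕ) :
    D (s + 1) * (1 - qv ^ (s + 1)) - av * dv * qint (s + 1)
      = -(bv * cv) * qint (s + 1) * qv ^ (s + 1) := by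
  rw [D]
  linear_combination qpow (s + 1) + qint (s + 1) * hq

lemma bracket2 (s : ℕ) :
    dd s 0 * ((qv ^ (s + 1))⁻¹ - 1) + av * (qv ^ (s + 1))⁻¹ * dd (s + 1) 0
      = bv * cv / dv * dd (s + 1) 0 := by
  rw [dd_succ0]
  have h1 := D_ne (s + 1)
  have h2 : qv ^ (s + 1) ≠ 0 := pow_ne_zero _ qv_ne
  field_simp [dv_ne]
  linear_combination (dd s 0) * keyid2 s

def T (m : ℕ) : K4 := ∑ i ∈ range m, dd i 0 * av ^ (i + 1) * S (i + 1) m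

lemma G0_split (m : ℕ) :
    G 0 m = (∑ i ∈ range m, av ^ (i + 1) * S (i + 1) m * dd (i + 1) 0) + 1 := by
  rw [G, sum_range_succ']
  simp [S_zero, dd_zero_zero]

lemma final_key (m : ℕ) :
    av * dv * D m + bv * cv * (qv ^ m - D m) = av * dv := by
  rw [D]
  linear_combination (-(bv * cv)) * qpow m + (-(bv * cv * qint m)) * hq

lemma final_id (m : ℕ) :
    av + bv * cv / dv * (qv ^ m * (D m)⁻¹ - 1) = av * (D m)⁻¹ := by
  have h1 := D_ne m
  field_simp [dv_ne]
  linear_combination final_key m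

lemma Tstep (m : ℕ) : T (m + 1) = T m + av * (D m)⁻¹ := by
  have qvinv : ∀ i : ℕ, qv * (qv ^ (i + 1))⁻¹ = (qv ^ i)⁻¹ := qv_inv_succ
  have expand : T (m + 1)
      = (∑ i ∈ range (m + 1), dd i 0 * av ^ (i + 1) * ((qv ^ (i + 1))⁻¹ * S (i + 1) m))
        + ∑ i ∈ range (m + 1), dd i 0 * av ^ (i + 1) * (qv * (qv ^ (i + 1))⁻¹ * S i m) := by
    rw [T, ← sum_add_distrib]
    refine sum_congr rfl fun i _ => ?_
    rw [srec]
    ring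
  have hA : (∑ i ∈ range (m + 1), dd i 0 * av ^ (i + 1) * ((qv ^ (i + 1))⁻¹ * S (i + 1) m))
      = ∑ i ∈ range m, dd i 0 * av ^ (i + 1) * ((qv ^ (i + 1))⁻¹ * S (i + 1) m) := by
    rw [sum_range_succ, S_gt (Nat.lt_succ_self m)]
    simp
  have hB : (∑ i ∈ range (m + 1), dd i 0 * av ^ (i + 1) * (qv * (qv ^ (i + 1))⁻¹ * S i m))
      = (∑ i ∈ range m, dd (i + 1) 0 * av ^ (i + 2) * (qv * (qv ^ (i + 2))⁻¹ * S (i + 1) m))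
        + av := by
    rw [sum_range_succ' (fun i => dd i 0 * av ^ (i + 1) * (qv * (qv ^ (i + 1))⁻¹ * S i m)) m]
    congr 1
    rw [dd_zero_zero, S_zero, pow_one, pow_one, mul_inv_cancel₀ qv_ne]
    ring
  have pointwise : ∀ i ∈ range m,
      dd i 0 * av ^ (i + 1) * ((qv ^ (i + 1))⁻¹ * S (i + 1) m)
        + dd (i + 1) 0 * av ^ (i + 2) * (qv * (qv ^ (i + 2))⁻¹ * S (i + 1) m)
      = dd i 0 * av ^ (i + 1) * S (i + 1) m
        + av ^ (i + 1) * S (i + 1) m * (bv * cv / dv * dd (i + 1) 0) := by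
    intro i _
    rw [qvinv (i + 1)]
    linear_combination (av ^ (i + 1) * S (i + 1) m) * bracket2 i
  have combine : T (m + 1)
      = T m + (∑ i ∈ range m,
          av ^ (i + 1) * S (i + 1) m * (bv * cv / dv * dd (i + 1) 0)) + av := by
    rw [expand, hA, hB, ← add_assoc, ← sum_add_distrib, sum_congr rfl pointwise,
      sum_add_distrib, T]
  have gsum : (∑ i ∈ range m, av ^ (i + 1) * S (i + 1) m * (bv * cv / dv * dd (i + 1) 0))
      = bv * cv / dv * (G 0 m - 1) := by
    rw [G0_split, add_sub_cancel_right, mul_sum]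
    exact sum_congr rfl fun i _ => by ring
  rw [combine, gsum, G0]
  linear_combination final_id m

lemma Tmain (m : ℕ) : T m = av * ∑ d ∈ range m, (D d)⁻¹ := by
  induction m with
  | zero => simp [T]
  | succ m ih => rw [Tstep, ih, sum_range_succ, mul_add]

lemma prodIcc (r : ℕ) :
    (∏ p ∈ Finset.Icc 1 r, (1 + bv * cv * qint (p - 1))) = Pp r := by
  rw [← Finset.Ico_add_one_right_eq_Icc, Finset.prod_Ico_eq_prod_range]
  simp only [Nat.add_sub_cancel_left, Nat.add_sub_cancel]
  rw [Pp]
  exact Finset.prod_congr rfl fun i _ => by rw [D]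

lemma sumIcc (m : ℕ) :
    (∑ r ∈ Finset.Icc 1 m,
      ((-dv) ^ (r - 1) * qfact (r - 1) /
          ∏ p ∈ Finset.Icc 1 r, (1 + bv * cv * qint (p - 1))) *
        av ^ r *
        ∑ B ∈ (Finset.Icc 1 m).powersetCard r,
          qv ^ (∑ b ∈ B, b) * (qv ^ (r * m))⁻¹) = T m := by
  have hS : ∀ r, (∑ B ∈ (Finset.Icc 1 m).powersetCard r,
      qv ^ (∑ b ∈ B, b) * (qv ^ (r * m))⁻¹) = S r m := fun r => rfl
  simp only [hS]
  rw [← Finset.Ico_add_one_right_eq_Icc, Finset.sum_Ico_eq_sum_range]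
  simp only [Nat.add_sub_cancel]
  rw [T]
  refine Finset.sum_congr rfl fun i _ => ?_
  rw [prodIcc (1 + i)]
  simp only [Nat.add_sub_cancel_left, Nat.add_sub_cancel]
  rw [Nat.add_comm 1 i]
  simp only [dd, Nat.add_zero]

end Stmt7aux

open Stmt7aux in
/-- (1/β) ∑_{r=1}^{m} ((−δ)^{r−1}[r−1]! / ∏_{p=1}^{r}(1+βγ[p−1])) α^r
  ∑_{1≤b_1<⋯<b_r≤m} q^{∑_p (b_p − m)} = (α/β) ∑_{d=0}^{m−1} 1/(1+βγ[d]). -/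
theorem stmt7 (m : ℕ) (hm : 0 < m) :
    bv⁻¹ *
      ∑ r ∈ Finset.Icc 1 m,
        ((-dv) ^ (r - 1) * qfact (r - 1) /
            ∏ p ∈ Finset.Icc 1 r, (1 + bv * cv * qint (p - 1))) *
          av ^ r *
          ∑ B ∈ (Finset.Icc 1 m).powersetCard r,
            qv ^ (∑ b ∈ B, b) * (qv ^ (r * m))⁻¹ =
    av / bv * ∑ d ∈ Finset.range m, (1 + bv * cv * qint d)⁻¹ := by
  rw [sumIcc, Tmain]
  have hD : (∑ d ∈ Finset.range m, (1 + bv * cv * qint d)⁻¹)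
      = ∑ d ∈ Finset.range m, (D d)⁻¹ :=
    Finset.sum_congr rfl fun d _ => by rw [D]
  rw [hD, div_eq_mul_inv]
  ring

end
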